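/- If s, t ≥ 1 satisfy 8(s+t) ≤ st, then the 3-uniform hypergraph K⁺_{s,t} is eligible with Δ(K⁺_{s,t}) = s + t and e(K⁺_{s,t}) = st. -/

import Mathlib

/-- A 3-uniform hypergraph on vertex type `V`: a finite set of edges, each of size 3. -/
structure Hypergraph3 (V : Type*) where
  edges : Finset (Finset V)
  card3 : ∀ e ∈ edges, e.card = 3

variable {V : Type*} [DecidableEq V]

/-- The edges of `F` contained in the vertex set `U`. -/
def edgesIn (F : Hypergraph3 V) (U : Finset V) : Finset (Finset V) :=
  F.edges.filter (fun e => e ⊆ U)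

/-- The deficiency `Δ(U) = |U| - e(F[U])`. -/
def defic (F : Hypergraph3 V) (U : Finset V) : ℤ :=
  (U.card : ℤ) - ((edgesIn F U).card : ℤ)

/-- `A` is independent in `F` if no edge of `F` is contained in `A`. -/
def Indep (F : Hypergraph3 V) (A : Finset V) : Prop :=
  ∀ e ∈ F.edges, ¬ e ⊆ A

/-- `A` is good: independent, and every strict superset `U` has `Δ(U) ≥ |A| + 1`. -/
def Good (F : Hypergraph3 V) (A : Finset V) : Prop :=
  Indep F A ∧ ∀ U : Finset V, A ⊂ U → (A.card : ℤ) + 1 ≤ defic F U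

variable [Fintype V]

/-- The degree of a vertex: the number of edges containing it. -/
def deg (F : Hypergraph3 V) (x : V) : ℕ :=
  (F.edges.filter (fun e => x ∈ e)).card

/-- `F` is eligible with data `A, B, u, v` and deficiency `k`:
(i) `A, B` are disjoint good sets of size `k - 1`;
(ii) `u ≠ v` are vertices outside `A ∪ B`;
(iii) at most `e(F)/4 - k` vertices have degree `> 1`, every edge contains at most one
vertex of degree `1`, and there are no isolated vertices;
(iv) every `U` with `|U| ≥ 2` has `Δ(U) ≥ 2`. -/
def EligibleWith (F : Hypergraph3 V) (A B : Finset V) (u v : V) (k : ℕ) : Prop :=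
  1 ≤ k ∧ defic F Finset.univ = (k : ℤ) ∧
  Good F A ∧ Good F B ∧ Disjoint A B ∧ A.card = k - 1 ∧ B.card = k - 1 ∧
  u ≠ v ∧ u ∉ A ∪ B ∧ v ∉ A ∪ B ∧
  (((Finset.univ.filter (fun x => 1 < deg F x)).card : ℚ) ≤ (F.edges.card : ℚ) / 4 - k) ∧
  (∀ e ∈ F.edges, (e.filter (fun x => deg F x = 1)).card ≤ 1) ∧
  (∀ x : V, 1 ≤ deg F x) ∧
  (∀ U : Finset V, 2 ≤ U.card → 2 ≤ defic F U)

/-- `F` is eligible. -/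
def Eligible (F : Hypergraph3 V) : Prop :=
  ∃ A B u v k, EligibleWith F A B u v k

/-- The vertex type of `K⁺_{s,t}`: left part, right part, and one vertex per edge. -/
abbrev KV (s t : ℕ) := Fin s ⊕ Fin t ⊕ Fin s × Fin t

/-- The 3-edge of `K⁺_{s,t}` corresponding to the pair `p`. -/
def KplusEdge (s t : ℕ) (p : Fin s × Fin t) : Finset (KV s t) :=
  {Sum.inl p.1, Sum.inr (Sum.inl p.2), Sum.inr (Sum.inr p)}

/-- `K⁺_{s,t}`: the 3-uniform hypergraph obtained from `K_{s,t}` by adding a distinct new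
vertex to each edge. -/
def Kplus (s t : ℕ) : Hypergraph3 (KV s t) where
  edges := Finset.univ.image (KplusEdge s t)
  card3 := by
    intro e he
    simp only [Finset.mem_image] at he
    obtain ⟨p, -, rfl⟩ := he
    rw [KplusEdge, Finset.card_insert_of_notMem (by simp),
      Finset.card_insert_of_notMem (by simp), Finset.card_singleton]

open Finset

/-- Abstract forest bound: if each element `e` of `M ⊆ X` has two "endpoints" `ι e, o e ∈ S`,
`ι` is injective on `X`, and a depth function makes `ι e` strictly deeper, then
`|M| + 1 ≤ |S|` provided `M` is nonempty. -/
lemma forest_bound {α β : Type*} [DecidableEq β] (X : Finset α) (ι o : α → β) (d : β → ℕ)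
    (hd : ∀ e ∈ X, d (ι e) = d (o e) + 1) (hinj : Set.InjOn ι X) (S : Finset β)
    (M : Finset α) (hM : M ⊆ X) (hMS : ∀ e ∈ M, ι e ∈ S ∧ o e ∈ S) (hne : M.Nonempty) :
    M.card + 1 ≤ S.card := by
  classical
  set N : Finset β := S.filter (fun v => ∃ e ∈ M, ι e = v ∨ o e = v) with hN
  obtain ⟨e0, he0⟩ := hne
  have hNne : N.Nonempty := ⟨ι e0, by
    simp only [hN, mem_filter]
    exact ⟨(hMS e0 he0).1, e0, he0, Or.inl rfl⟩⟩
  obtain ⟨x, hxN, hxmin⟩ := N.exists_min_image d hNne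
  have hxS : x ∈ S := (mem_filter.mp hxN).1
  have hmaps : ∀ e ∈ M, ι e ∈ S.erase x := by
    intro e he
    refine mem_erase.mpr ⟨?_, (hMS e he).1⟩
    intro hix
    have hoN : o e ∈ N := by
      simp only [hN, mem_filter]
      exact ⟨(hMS e he).2, e, he, Or.inr rfl⟩
    have := hxmin _ hoN
    have hde := hd e (hM he)
    rw [hix] at hde
    omega
  have hcard : M.card ≤ (S.erase x).card :=
    Finset.card_le_card_of_injOn ι hmaps (fun a ha b hb => hinj (hM ha) (hM hb))
  have : (S.erase x).card = S.card - 1 := Finset.card_erase_of_mem hxS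
  have hS1 : 1 ≤ S.card := Finset.card_pos.mpr ⟨x, hxS⟩
  omega

open Finset

section KplusLemmas

variable {s t : ℕ}

/-- Abbreviations for the three kinds of vertices. -/
def lv (a : Fin s) : KV s t := Sum.inl a
def rv (b : Fin t) : KV s t := Sum.inr (Sum.inl b)
def pairv (p : Fin s × Fin t) : KV s t := Sum.inr (Sum.inr p)

lemma pairv_injective : Function.Injective (pairv (s := s) (t := t)) := by
  intro p q h
  simpa [pairv] using h

lemma KplusEdge_injective : Function.Injective (KplusEdge s t) := by
  intro p q h
  have hp : pairv p ∈ KplusEdge s t q := by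
    rw [← h]; simp [KplusEdge, pairv]
  simp only [KplusEdge, mem_insert, mem_singleton, pairv] at hp
  rcases hp with h1 | h1 | h1 <;> simp_all

lemma KplusEdge_subset_iff (p : Fin s × Fin t) (U : Finset (KV s t)) :
    KplusEdge s t p ⊆ U ↔ lv p.1 ∈ U ∧ rv p.2 ∈ U ∧ pairv p ∈ U := by
  simp [KplusEdge, insert_subset_iff, lv, rv, pairv]

lemma edgesIn_Kplus_card (U : Finset (KV s t)) :
    (edgesIn (Kplus s t) U).card
      = (univ.filter (fun p : Fin s × Fin t => KplusEdge s t p ⊆ U)).card := by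
  classical
  have : edgesIn (Kplus s t) U
      = (univ.filter (fun p : Fin s × Fin t => KplusEdge s t p ⊆ U)).image (KplusEdge s t) := by
    rw [edgesIn]
    show (univ.image (KplusEdge s t)).filter (fun e => e ⊆ U) = _
    rw [Finset.filter_image]
  rw [this, Finset.card_image_of_injective _ KplusEdge_injective]

lemma Kplus_edges_card : (Kplus s t).edges.card = s * t := by
  classical
  show ((univ : Finset (Fin s × Fin t)).image (KplusEdge s t)).card = s * t
  rw [Finset.card_image_of_injective _ KplusEdge_injective, card_univ]
  simp

lemma card_KV : Fintype.card (KV s t) = s + t + s * t := by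
  simp [add_assoc]

lemma deg_Kplus_card (x : KV s t) :
    deg (Kplus s t) x = (univ.filter (fun p : Fin s × Fin t => x ∈ KplusEdge s t p)).card := by
  classical
  rw [deg]
  show ((univ.image (KplusEdge s t)).filter (fun e => x ∈ e)).card = _
  rw [Finset.filter_image, Finset.card_image_of_injective _ KplusEdge_injective]

lemma mem_KplusEdge_iff (x : KV s t) (p : Fin s × Fin t) :
    x ∈ KplusEdge s t p ↔ x = lv p.1 ∨ x = rv p.2 ∨ x = pairv p := by
  simp [KplusEdge, lv, rv, pairv]

lemma deg_lv (a : Fin s) : deg (Kplus s t) (lv a) = t := by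
  classical
  rw [deg_Kplus_card]
  have : (univ.filter (fun p : Fin s × Fin t => lv (t := t) a ∈ KplusEdge s t p))
      = {a} ×ˢ univ := by
    ext p
    simp only [mem_filter, mem_univ, true_and, mem_KplusEdge_iff, lv, rv, pairv,
      Finset.mem_product, mem_singleton]
    constructor
    · rintro (h | h | h) <;> simp_all [Prod.ext_iff]
    · rintro ⟨h1, -⟩; left; rw [h1]
  rw [this]
  simp

lemma deg_rv (b : Fin t) : deg (Kplus s t) (rv b) = s := by
  classical
  rw [deg_Kplus_card]
  have : (univ.filter (fun p : Fin s × Fin t => rv (s := s) b ∈ KplusEdge s t p))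
      = univ ×ˢ {b} := by
    ext p
    simp only [mem_filter, mem_univ, true_and, mem_KplusEdge_iff, lv, rv, pairv,
      Finset.mem_product, mem_singleton]
    constructor
    · rintro (h | h | h) <;> simp_all [Prod.ext_iff]
    · rintro rfl; right; left; rfl
  rw [this]
  simp

lemma deg_pairv (q : Fin s × Fin t) : deg (Kplus s t) (pairv q) = 1 := by
  classical
  rw [deg_Kplus_card]
  have : (univ.filter (fun p : Fin s × Fin t => pairv q ∈ KplusEdge s t p)) = {q} := by
    ext p
    simp only [mem_filter, mem_univ, true_and, mem_KplusEdge_iff, mem_singleton]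
    constructor
    · rintro (h | h | h) <;> simp_all [lv, rv, pairv, eq_comm]
    · rintro rfl; right; right; rfl
  rw [this, card_singleton]

end KplusLemmas

section GoodLemmas

variable {s t : ℕ}

/-- Whether a vertex of `KV s t` is one of the added "pair" vertices. -/
def isPairB : KV s t → Bool := fun v => match v with
  | Sum.inr (Sum.inr _) => true
  | _ => false

lemma isPairB_lv (a : Fin s) : isPairB (lv (t := t) a) = false := rfl
lemma isPairB_rv (b : Fin t) : isPairB (rv (s := s) b) = false := rfl
lemma isPairB_pairv (p : Fin s × Fin t) : isPairB (pairv p) = true := rfl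

lemma eq_pairv_of_isPairB {v : KV s t} (h : isPairB v = true) : ∃ p, v = pairv p := by
  rcases v with a | b | p
  · simp [isPairB] at h
  · simp [isPairB] at h
  · exact ⟨p, rfl⟩

lemma good_of_forest (T : Finset (Fin s × Fin t)) (ι o : Fin s × Fin t → KV s t)
    (d : KV s t → ℕ)
    (hend : ∀ p ∈ T, (ι p = lv p.1 ∧ o p = rv p.2) ∨ (ι p = rv p.2 ∧ o p = lv p.1))
    (hd : ∀ p ∈ T, d (ι p) = d (o p) + 1) (hinj : Set.InjOn ι T) :
    Good (Kplus s t) (T.image pairv) := by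
  classical
  set A : Finset (KV s t) := T.image pairv with hA
  have hApair : ∀ v ∈ A, isPairB v = true := by
    intro v hv
    obtain ⟨p, -, rfl⟩ := Finset.mem_image.mp hv
    rfl
  constructor
  · -- Independence
    intro e he hsub
    obtain ⟨p, -, rfl⟩ := Finset.mem_image.mp he
    have hlv : lv (t := t) p.1 ∈ A := hsub (by simp [KplusEdge, lv])
    have := hApair _ hlv
    simp [isPairB_lv] at this
  · intro U hU
    have hAU : A ⊆ U := hU.subset
    have hAltU : A.card < U.card := Finset.card_lt_card hU
    set P : Finset (Fin s × Fin t) :=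
      univ.filter (fun p => KplusEdge s t p ⊆ U) with hP
    have hdef : defic (Kplus s t) U = (U.card : ℤ) - (P.card : ℤ) := by
      rw [defic, edgesIn_Kplus_card]
    set Enp : Finset (KV s t) := U.filter (fun v => isPairB v = false) with hEnp
    set Ep : Finset (KV s t) := (U \ A).filter (fun v => isPairB v = true) with hEp
    -- cardinality decomposition of U
    have h1 : (U \ A).card + A.card = U.card := Finset.card_sdiff_add_card_eq_card hAU
    have h2 : Ep.card + ((U \ A).filter (fun v => ¬ isPairB v = true)).card = (U \ A).card :=
      Finset.card_filter_add_card_filter_not (p := fun v => isPairB v = true)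
    have h3 : (U \ A).filter (fun v => ¬ isPairB v = true) = Enp := by
      ext v
      simp only [Finset.mem_filter, Finset.mem_sdiff, hEnp, Bool.not_eq_true]
      constructor
      · rintro ⟨⟨hvU, -⟩, hv⟩; exact ⟨hvU, hv⟩
      · rintro ⟨hvU, hv⟩
        refine ⟨⟨hvU, fun hvA => ?_⟩, hv⟩
        rw [hApair v hvA] at hv; exact Bool.true_eq_false.mp hv
    rw [h3] at h2
    -- splitting the edges inside U
    have hsplitP : (P.filter (· ∈ T)).card + (P.filter (· ∉ T)).card = P.card :=
      Finset.card_filter_add_card_filter_not (p := (· ∈ T))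
    have hP2 : (P.filter (· ∉ T)).card ≤ Ep.card := by
      apply Finset.card_le_card_of_injOn pairv
      · intro p hp
        replace hp : p ∈ P.filter (· ∉ T) := hp
        rw [Finset.mem_filter] at hp
        obtain ⟨hpP, hpT⟩ := hp
        rw [hP, Finset.mem_filter, KplusEdge_subset_iff] at hpP
        refine Finset.mem_filter.mpr ⟨Finset.mem_sdiff.mpr ⟨hpP.2.2.2, fun hm => ?_⟩,
          isPairB_pairv p⟩
        obtain ⟨q, hq, hqe⟩ := Finset.mem_image.mp hm
        exact hpT (pairv_injective hqe ▸ hq)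
      · intro x hx y hy hxy
        exact pairv_injective hxy
    have hP1 : (P.filter (· ∈ T)).card + 1 ≤ Enp.card ∨ P = ∅ := by
      by_cases hEnpne : Enp.Nonempty
      · left
        rcases Finset.eq_empty_or_nonempty (P.filter (· ∈ T)) with he | hne
        · rw [he]; simpa using Finset.card_pos.mpr hEnpne
        · apply forest_bound T ι o d hd hinj Enp _ (fun p hp => (Finset.mem_filter.mp hp).2)
            _ hne
          intro p hp
          rw [Finset.mem_filter] at hp
          obtain ⟨hpP, hpT⟩ := hp
          rw [hP, Finset.mem_filter, KplusEdge_subset_iff] at hpP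
          have hlvmem : lv p.1 ∈ Enp :=
            Finset.mem_filter.mpr ⟨hpP.2.1, isPairB_lv p.1⟩
          have hrvmem : rv p.2 ∈ Enp :=
            Finset.mem_filter.mpr ⟨hpP.2.2.1, isPairB_rv p.2⟩
          rcases hend p hpT with ⟨hi, ho⟩ | ⟨hi, ho⟩
          · exact ⟨hi ▸ hlvmem, ho ▸ hrvmem⟩
          · exact ⟨hi ▸ hrvmem, ho ▸ hlvmem⟩
      · right
        rw [Finset.not_nonempty_iff_eq_empty] at hEnpne
        rw [hP, Finset.eq_empty_iff_forall_notMem]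
        intro p hp
        rw [Finset.mem_filter, KplusEdge_subset_iff] at hp
        have : lv p.1 ∈ Enp := Finset.mem_filter.mpr ⟨hp.2.1, isPairB_lv p.1⟩
        rw [hEnpne] at this
        exact absurd this (Finset.notMem_empty _)
    rw [hdef]
    rcases hP1 with hP1 | hP1
    · omega
    · rw [hP1]
      simp only [Finset.card_empty]
      omega

end GoodLemmas

section Trees

variable {s t : ℕ}

/-- First spanning tree of `K_{s,t}`: edges `(0,b)` for `b ≠ 1`, `(a,0)` for `a ≥ 2`,
`(1,2)` and `(2,1)`. -/
def T1 (s t : ℕ) : Finset (Fin s × Fin t) :=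
  univ.filter (fun p =>
    (p.1.val = 0 ∧ p.2.val ≠ 1) ∨ (2 ≤ p.1.val ∧ p.2.val = 0) ∨
    (p.1.val = 1 ∧ p.2.val = 2) ∨ (p.1.val = 2 ∧ p.2.val = 1))

/-- Second spanning tree, edge-disjoint from the first. -/
def T2 (s t : ℕ) : Finset (Fin s × Fin t) :=
  univ.filter (fun p =>
    (p.1.val = 1 ∧ p.2.val ≠ 2) ∨ ((p.1.val = 0 ∨ 3 ≤ p.1.val) ∧ p.2.val = 1) ∨
    (p.1.val = 3 ∧ p.2.val = 2) ∨ (p.1.val = 2 ∧ p.2.val = 3))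

lemma mem_T1 (p : Fin s × Fin t) : p ∈ T1 s t ↔
    (p.1.val = 0 ∧ p.2.val ≠ 1) ∨ (2 ≤ p.1.val ∧ p.2.val = 0) ∨
    (p.1.val = 1 ∧ p.2.val = 2) ∨ (p.1.val = 2 ∧ p.2.val = 1) := by
  simp [T1]

lemma mem_T2 (p : Fin s × Fin t) : p ∈ T2 s t ↔
    (p.1.val = 1 ∧ p.2.val ≠ 2) ∨ ((p.1.val = 0 ∨ 3 ≤ p.1.val) ∧ p.2.val = 1) ∨
    (p.1.val = 3 ∧ p.2.val = 2) ∨ (p.1.val = 2 ∧ p.2.val = 3) := by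
  simp [T2]

/-- The child endpoint of an edge of `T1`. -/
def iota1 (p : Fin s × Fin t) : KV s t :=
  if p.1.val = 0 ∨ p.2.val = 1 then rv p.2 else lv p.1

/-- The parent endpoint of an edge of `T1`. -/
def oth1 (p : Fin s × Fin t) : KV s t :=
  if p.1.val = 0 ∨ p.2.val = 1 then lv p.1 else rv p.2

/-- Depth function for `T1`. -/
def dep1 : KV s t → ℕ := fun v => match v with
  | Sum.inl a => if a.val = 0 then 0 else 2
  | Sum.inr (Sum.inl b) => if b.val = 1 then 3 else 1
  | Sum.inr (Sum.inr _) => 0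

def iota2 (p : Fin s × Fin t) : KV s t :=
  if p.1.val = 1 ∨ p.2.val = 2 then rv p.2 else lv p.1

def oth2 (p : Fin s × Fin t) : KV s t :=
  if p.1.val = 1 ∨ p.2.val = 2 then lv p.1 else rv p.2

def dep2 : KV s t → ℕ := fun v => match v with
  | Sum.inl a => if a.val = 1 then 0 else 2
  | Sum.inr (Sum.inl b) => if b.val = 2 then 3 else 1
  | Sum.inr (Sum.inr _) => 0

lemma dep1_lv (a : Fin s) : dep1 (lv (t := t) a) = if a.val = 0 then 0 else 2 := rfl
lemma dep1_rv (b : Fin t) : dep1 (rv (s := s) b) = if b.val = 1 then 3 else 1 := rfl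
lemma dep2_lv (a : Fin s) : dep2 (lv (t := t) a) = if a.val = 1 then 0 else 2 := rfl
lemma dep2_rv (b : Fin t) : dep2 (rv (s := s) b) = if b.val = 2 then 3 else 1 := rfl

lemma hend1 : ∀ p ∈ T1 s t,
    (iota1 p = lv p.1 ∧ oth1 p = rv p.2) ∨ (iota1 p = rv p.2 ∧ oth1 p = lv p.1) := by
  intro p _
  unfold iota1 oth1
  split_ifs with h
  · right; exact ⟨rfl, rfl⟩
  · left; exact ⟨rfl, rfl⟩

lemma hend2 : ∀ p ∈ T2 s t,
    (iota2 p = lv p.1 ∧ oth2 p = rv p.2) ∨ (iota2 p = rv p.2 ∧ oth2 p = lv p.1) := by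
  intro p _
  unfold iota2 oth2
  split_ifs with h
  · right; exact ⟨rfl, rfl⟩
  · left; exact ⟨rfl, rfl⟩

lemma hdep1 : ∀ p ∈ T1 s t, dep1 (iota1 p) = dep1 (oth1 p) + 1 := by
  intro p hp
  rw [mem_T1] at hp
  unfold iota1 oth1
  split_ifs with h <;>
    simp only [dep1_lv, dep1_rv] <;> split_ifs <;> omega

lemma hdep2 : ∀ p ∈ T2 s t, dep2 (iota2 p) = dep2 (oth2 p) + 1 := by
  intro p hp
  rw [mem_T2] at hp
  unfold iota2 oth2
  split_ifs with h <;>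
    simp only [dep2_lv, dep2_rv] <;> split_ifs <;> omega

lemma hinj1 : Set.InjOn iota1 ((T1 s t : Finset (Fin s × Fin t)) : Set (Fin s × Fin t)) := by
  intro p hp q hq hpq
  rw [Finset.mem_coe, mem_T1] at hp hq
  unfold iota1 at hpq
  split_ifs at hpq with h1 h2
  · have h2' : p.2 = q.2 := by simpa [rv] using hpq
    have hv : p.2.val = q.2.val := congrArg Fin.val h2'
    have : p.1.val = q.1.val ∧ p.2.val = q.2.val := by omega
    exact Prod.ext_iff.mpr ⟨Fin.ext this.1, Fin.ext this.2⟩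
  · simp [rv, lv] at hpq
  · simp [rv, lv] at hpq
  · have h1' : p.1 = q.1 := by simpa [lv] using hpq
    have hv : p.1.val = q.1.val := congrArg Fin.val h1'
    have : p.1.val = q.1.val ∧ p.2.val = q.2.val := by omega
    exact Prod.ext_iff.mpr ⟨Fin.ext this.1, Fin.ext this.2⟩

lemma hinj2 : Set.InjOn iota2 ((T2 s t : Finset (Fin s × Fin t)) : Set (Fin s × Fin t)) := by
  intro p hp q hq hpq
  rw [Finset.mem_coe, mem_T2] at hp hq
  unfold iota2 at hpq
  split_ifs at hpq with h1 h2
  · have h2' : p.2 = q.2 := by simpa [rv] using hpq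
    have hv : p.2.val = q.2.val := congrArg Fin.val h2'
    have : p.1.val = q.1.val ∧ p.2.val = q.2.val := by omega
    exact Prod.ext_iff.mpr ⟨Fin.ext this.1, Fin.ext this.2⟩
  · simp [rv, lv] at hpq
  · simp [rv, lv] at hpq
  · have h1' : p.1 = q.1 := by simpa [lv] using hpq
    have hv : p.1.val = q.1.val := congrArg Fin.val h1'
    have : p.1.val = q.1.val ∧ p.2.val = q.2.val := by omega
    exact Prod.ext_iff.mpr ⟨Fin.ext this.1, Fin.ext this.2⟩

lemma T1_disj_T2 (p : Fin s × Fin t) (h1 : p ∈ T1 s t) (h2 : p ∈ T2 s t) : False := by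
  rw [mem_T1] at h1
  rw [mem_T2] at h2
  omega

end Trees

section TreeCards

variable {s t : ℕ}

def iota1' (p : Fin s × Fin t) : Fin s ⊕ Fin t :=
  if p.1.val = 0 ∨ p.2.val = 1 then Sum.inr p.2 else Sum.inl p.1

def iota2' (p : Fin s × Fin t) : Fin s ⊕ Fin t :=
  if p.1.val = 1 ∨ p.2.val = 2 then Sum.inr p.2 else Sum.inl p.1

lemma hinj1' : Set.InjOn iota1' ((T1 s t : Finset (Fin s × Fin t)) : Set (Fin s × Fin t)) := by
  intro p hp q hq hpq
  rw [Finset.mem_coe, mem_T1] at hp hq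
  unfold iota1' at hpq
  split_ifs at hpq with h1 h2 <;> simp only [Sum.inr.injEq, Sum.inl.injEq] at hpq
  · have hv : p.2.val = q.2.val := congrArg Fin.val hpq
    have : p.1.val = q.1.val ∧ p.2.val = q.2.val := by omega
    exact Prod.ext_iff.mpr ⟨Fin.ext this.1, Fin.ext this.2⟩
  · have hv : p.1.val = q.1.val := congrArg Fin.val hpq
    have : p.1.val = q.1.val ∧ p.2.val = q.2.val := by omega
    exact Prod.ext_iff.mpr ⟨Fin.ext this.1, Fin.ext this.2⟩

lemma hinj2' : Set.InjOn iota2' ((T2 s t : Finset (Fin s × Fin t)) : Set (Fin s × Fin t)) := by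
  intro p hp q hq hpq
  rw [Finset.mem_coe, mem_T2] at hp hq
  unfold iota2' at hpq
  split_ifs at hpq with h1 h2 <;> simp only [Sum.inr.injEq, Sum.inl.injEq] at hpq
  · have hv : p.2.val = q.2.val := congrArg Fin.val hpq
    have : p.1.val = q.1.val ∧ p.2.val = q.2.val := by omega
    exact Prod.ext_iff.mpr ⟨Fin.ext this.1, Fin.ext this.2⟩
  · have hv : p.1.val = q.1.val := congrArg Fin.val hpq
    have : p.1.val = q.1.val ∧ p.2.val = q.2.val := by omega
    exact Prod.ext_iff.mpr ⟨Fin.ext this.1, Fin.ext this.2⟩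

lemma T1_image (hs : 4 ≤ s) (ht : 4 ≤ t) :
    (T1 s t).image iota1' = univ.erase (Sum.inl ⟨0, by omega⟩) := by
  ext v
  simp only [Finset.mem_image, Finset.mem_erase, Finset.mem_univ, and_true]
  constructor
  · rintro ⟨p, hp, rfl⟩
    rw [mem_T1] at hp
    unfold iota1'
    split_ifs with h
    · simp
    · simp only [ne_eq, Sum.inl.injEq]
      intro hc
      have : p.1.val = 0 := by rw [hc]
      omega
  · intro hv
    rcases v with a | b
    · have ha : a.val ≠ 0 := by
        intro h0
        exact hv (congrArg Sum.inl (Fin.ext h0))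
      by_cases ha1 : a.val = 1
      · refine ⟨(a, ⟨2, by omega⟩), ?_, ?_⟩
        · rw [mem_T1]; right; right; left; exact ⟨ha1, rfl⟩
        · unfold iota1'; rw [if_neg (by simp; omega)]
      · refine ⟨(a, ⟨0, by omega⟩), ?_, ?_⟩
        · rw [mem_T1]; right; left; exact ⟨by simp; omega, rfl⟩
        · unfold iota1'; rw [if_neg (by simp; omega)]
    · by_cases hb1 : b.val = 1
      · refine ⟨(⟨2, by omega⟩, b), ?_, ?_⟩
        · rw [mem_T1]; right; right; right; exact ⟨rfl, hb1⟩
        · unfold iota1'; rw [if_pos (Or.inr hb1)]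
      · refine ⟨(⟨0, by omega⟩, b), ?_, ?_⟩
        · rw [mem_T1]; left; exact ⟨rfl, hb1⟩
        · unfold iota1'; rw [if_pos (Or.inl rfl)]

lemma T2_image (hs : 4 ≤ s) (ht : 4 ≤ t) :
    (T2 s t).image iota2' = univ.erase (Sum.inl ⟨1, by omega⟩) := by
  ext v
  simp only [Finset.mem_image, Finset.mem_erase, Finset.mem_univ, and_true]
  constructor
  · rintro ⟨p, hp, rfl⟩
    rw [mem_T2] at hp
    unfold iota2'
    split_ifs with h
    · simp
    · simp only [ne_eq, Sum.inl.injEq]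
      intro hc
      have : p.1.val = 1 := by rw [hc]
      omega
  · intro hv
    rcases v with a | b
    · have ha : a.val ≠ 1 := by
        intro h0
        exact hv (congrArg Sum.inl (Fin.ext h0))
      by_cases ha2 : a.val = 2
      · refine ⟨(a, ⟨3, by omega⟩), ?_, ?_⟩
        · rw [mem_T2]; right; right; right; exact ⟨ha2, rfl⟩
        · unfold iota2'; rw [if_neg (by simp; omega)]
      · refine ⟨(a, ⟨1, by omega⟩), ?_, ?_⟩
        · rw [mem_T2]; right; left; exact ⟨by simp; omega, rfl⟩
        · unfold iota2'; rw [if_neg (by simp; omega)]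
    · by_cases hb2 : b.val = 2
      · refine ⟨(⟨3, by omega⟩, b), ?_, ?_⟩
        · rw [mem_T2]; right; right; left; exact ⟨rfl, hb2⟩
        · unfold iota2'; rw [if_pos (Or.inr hb2)]
      · refine ⟨(⟨1, by omega⟩, b), ?_, ?_⟩
        · rw [mem_T2]; left; exact ⟨rfl, hb2⟩
        · unfold iota2'; rw [if_pos (Or.inl rfl)]

lemma T1_card (hs : 4 ≤ s) (ht : 4 ≤ t) : (T1 s t).card = s + t - 1 := by
  classical
  have h := Finset.card_image_of_injOn (f := iota1') (hinj1' (s := s) (t := t))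
  rw [T1_image hs ht] at h
  rw [← h, Finset.card_erase_of_mem (Finset.mem_univ _), Finset.card_univ]
  simp

lemma T2_card (hs : 4 ≤ s) (ht : 4 ≤ t) : (T2 s t).card = s + t - 1 := by
  classical
  have h := Finset.card_image_of_injOn (f := iota2') (hinj2' (s := s) (t := t))
  rw [T2_image hs ht] at h
  rw [← h, Finset.card_erase_of_mem (Finset.mem_univ _), Finset.card_univ]
  simp

end TreeCards

section Final

variable {s t : ℕ}

lemma pair_filter_card :
    ((univ : Finset (KV s t)).filter (fun v => isPairB v = true)).card = s * t := by
  classical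
  have h : (univ : Finset (KV s t)).filter (fun v => isPairB v = true)
      = (univ : Finset (Fin s × Fin t)).image pairv := by
    ext v
    simp only [Finset.mem_filter, Finset.mem_univ, true_and, Finset.mem_image]
    constructor
    · intro hv
      obtain ⟨p, rfl⟩ := eq_pairv_of_isPairB hv
      exact ⟨p, rfl⟩
    · rintro ⟨p, -, rfl⟩
      exact isPairB_pairv p
  rw [h, Finset.card_image_of_injective _ pairv_injective, Finset.card_univ]
  simp

lemma nonpair_filter_card :
    ((univ : Finset (KV s t)).filter (fun v => isPairB v = false)).card = s + t := by
  classical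
  have h := Finset.card_filter_add_card_filter_not
    (s := (univ : Finset (KV s t))) (p := fun v => isPairB v = true)
  have h2 : (univ : Finset (KV s t)).filter (fun v => ¬ isPairB v = true)
      = (univ : Finset (KV s t)).filter (fun v => isPairB v = false) := by
    apply Finset.filter_congr
    intro v _
    simp
  rw [h2, pair_filter_card, Finset.card_univ, card_KV] at h
  omega

lemma degGT_filter (hs : 2 ≤ s) (ht : 2 ≤ t) :
    (univ : Finset (KV s t)).filter (fun x => 1 < deg (Kplus s t) x)
      = (univ : Finset (KV s t)).filter (fun v => isPairB v = false) := by
  classical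
  apply Finset.filter_congr
  intro v _
  rcases v with a | b | p
  · rw [show (Sum.inl a : KV s t) = lv a from rfl, deg_lv]
    simp [isPairB_lv]; omega
  · rw [show (Sum.inr (Sum.inl b) : KV s t) = rv b from rfl, deg_rv]
    simp [isPairB_rv]; omega
  · rw [show (Sum.inr (Sum.inr p) : KV s t) = pairv p from rfl, deg_pairv]
    simp [isPairB_pairv]

lemma defic_univ : defic (Kplus s t) univ = (s : ℤ) + t := by
  classical
  have h1 : edgesIn (Kplus s t) univ = (Kplus s t).edges := by
    rw [edgesIn]
    exact Finset.filter_true_of_mem (fun e _ => Finset.subset_univ e)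
  rw [defic, h1, Kplus_edges_card, Finset.card_univ, card_KV]
  push_cast
  ring

lemma deg_one_per_edge (hs : 2 ≤ s) (ht : 2 ≤ t) :
    ∀ e ∈ (Kplus s t).edges, (e.filter (fun x => deg (Kplus s t) x = 1)).card ≤ 1 := by
  classical
  intro e he
  obtain ⟨p, -, rfl⟩ := Finset.mem_image.mp he
  have h : (KplusEdge s t p).filter (fun x => deg (Kplus s t) x = 1) = {pairv p} := by
    ext x
    simp only [Finset.mem_filter, mem_KplusEdge_iff, Finset.mem_singleton]
    constructor
    · rintro ⟨h1 | h1 | h1, h2⟩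
      · rw [h1, deg_lv] at h2; omega
      · rw [h1, deg_rv] at h2; omega
      · exact h1
    · rintro rfl
      exact ⟨Or.inr (Or.inr rfl), deg_pairv p⟩
  rw [h, Finset.card_singleton]

lemma deg_pos (hs : 1 ≤ s) (ht : 1 ≤ t) : ∀ x : KV s t, 1 ≤ deg (Kplus s t) x := by
  intro x
  rcases x with a | b | p
  · rw [show (Sum.inl a : KV s t) = lv a from rfl, deg_lv]; omega
  · rw [show (Sum.inr (Sum.inl b) : KV s t) = rv b from rfl, deg_rv]; omega
  · rw [show (Sum.inr (Sum.inr p) : KV s t) = pairv p from rfl, deg_pairv]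

lemma defic_two (U : Finset (KV s t)) (hU : 2 ≤ U.card) : 2 ≤ defic (Kplus s t) U := by
  classical
  rw [defic, edgesIn_Kplus_card]
  set P : Finset (Fin s × Fin t) := univ.filter (fun p => KplusEdge s t p ⊆ U) with hP
  rcases Finset.eq_empty_or_nonempty P with he | ⟨p0, hp0⟩
  · rw [he]; simp; omega
  · have hp0' := hp0
    rw [hP, Finset.mem_filter, KplusEdge_subset_iff] at hp0'
    set W : Finset (KV s t) := U.filter (fun v => isPairB v = true) with hW
    have hPW : P.card ≤ W.card := by
      apply Finset.card_le_card_of_injOn pairv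
      · intro p hp
        replace hp : p ∈ P := hp
        rw [hP, Finset.mem_filter, KplusEdge_subset_iff] at hp
        exact Finset.mem_filter.mpr ⟨hp.2.2.2, isPairB_pairv p⟩
      · intro x _ y _ hxy
        exact pairv_injective hxy
    have hsplit : W.card + (U.filter (fun v => ¬ isPairB v = true)).card = U.card :=
      Finset.card_filter_add_card_filter_not (p := fun v => isPairB v = true)
    have h2 : 2 ≤ (U.filter (fun v => ¬ isPairB v = true)).card := by
      have hsub : ({lv p0.1, rv p0.2} : Finset (KV s t))
          ⊆ U.filter (fun v => ¬ isPairB v = true) := by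
        intro x hx
        rcases Finset.mem_insert.mp hx with rfl | hx
        · exact Finset.mem_filter.mpr ⟨hp0'.2.1, by simp [isPairB_lv]⟩
        · rw [Finset.mem_singleton] at hx
          subst hx
          exact Finset.mem_filter.mpr ⟨hp0'.2.2.1, by simp [isPairB_rv]⟩
      have hcard2 : ({lv p0.1, rv p0.2} : Finset (KV s t)).card = 2 := by
        rw [Finset.card_insert_of_notMem (by simp [lv, rv]), Finset.card_singleton]
      calc 2 = ({lv p0.1, rv p0.2} : Finset (KV s t)).card := hcard2.symm
        _ ≤ _ := Finset.card_le_card hsub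
    omega

end Final

/-- if `8(s+t) ≤ st` (with `s, t ≥ 1`), then `K⁺_{s,t}` is eligible, with
deficiency `s + t` and `st` edges. -/
theorem Kplus_eligible (s t : ℕ) (hs : 1 ≤ s) (ht : 1 ≤ t) (h : 8 * (s + t) ≤ s * t) :
    Eligible (Kplus s t) ∧ defic (Kplus s t) Finset.univ = (s : ℤ) + t ∧
    (Kplus s t).edges.card = s * t := by
  classical
  have hs4 : 4 ≤ s := by
    by_contra hc
    push_neg at hc
    interval_cases s <;> omega
  have ht4 : 4 ≤ t := by
    by_contra hc
    push_neg at hc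
    interval_cases t <;> omega
  refine ⟨?_, defic_univ, Kplus_edges_card⟩
  refine ⟨(T1 s t).image pairv, (T2 s t).image pairv,
    lv ⟨0, by omega⟩, rv ⟨0, by omega⟩, s + t,
    by omega, ?_, ?_, ?_, ?_, ?_, ?_, ?_, ?_, ?_, ?_, ?_, ?_, ?_⟩
  · rw [defic_univ]; push_cast; ring
  · exact good_of_forest (T1 s t) iota1 oth1 dep1 hend1 hdep1 hinj1
  · exact good_of_forest (T2 s t) iota2 oth2 dep2 hend2 hdep2 hinj2
  · rw [Finset.disjoint_left]
    intro v hvA hvB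
    obtain ⟨p, hp, rfl⟩ := Finset.mem_image.mp hvA
    obtain ⟨q, hq, hqe⟩ := Finset.mem_image.mp hvB
    exact T1_disj_T2 p hp ((pairv_injective hqe) ▸ hq)
  · rw [Finset.card_image_of_injective _ pairv_injective, T1_card hs4 ht4]
  · rw [Finset.card_image_of_injective _ pairv_injective, T2_card hs4 ht4]
  · simp [lv, rv]
  · intro hm
    rcases Finset.mem_union.mp hm with hm | hm <;>
      · obtain ⟨p, -, he⟩ := Finset.mem_image.mp hm
        simp [pairv, lv] at he
  · intro hm
    rcases Finset.mem_union.mp hm with hm | hm <;>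
      · obtain ⟨p, -, he⟩ := Finset.mem_image.mp hm
        simp [pairv, rv] at he
  · rw [degGT_filter (by omega) (by omega), nonpair_filter_card, Kplus_edges_card]
    have h' : ((8 * (s + t) : ℕ) : ℚ) ≤ ((s * t : ℕ) : ℚ) := by exact_mod_cast h
    push_cast at h' ⊢
    linarith
  · exact deg_one_per_edge (by omega) (by omega)
  · exact deg_pos (by omega) (by omega)
  · exact fun U hU => defic_two U hU
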